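/- Let V and P be probability mass functions on a finite set 𝒴 with V absolutely continuous with respect to P, and let Y₁,…,Yₙ be i.i.d. with law P. Then the probability that the empirical distribution (type) of (Y₁,…,Yₙ) equals V (assuming V is an n-type, i.e., n·V(y) ∈ ℕ for all y) is at least (n+1)^{-|𝒴|} · exp(−n·D(V‖P)). -/

import Mathlib

open scoped BigOperators

def IsPMF {α : Type*} [Fintype α] (p : α → ℝ) : Prop :=
  (∀ a, 0 ≤ p a) ∧ ∑ a, p a = 1

/-- Real-valued KL divergence `D(V‖P) = Σ_y V(y) ln(V(y)/P(y))`
(with the convention that terms with `V y = 0` vanish). -/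
noncomputable def klReal {α : Type*} [Fintype α] (p q : α → ℝ) : ℝ :=
  ∑ a, if p a = 0 then 0 else p a * Real.log (p a / q a)

/-- Empirical distribution (type) of a sequence `y ∈ 𝒴ⁿ`. -/
noncomputable def empDist {𝒴 : Type*} [Fintype 𝒴] [DecidableEq 𝒴] {n : ℕ}
    (y : Fin n → 𝒴) : 𝒴 → ℝ :=
  fun a => ((Finset.univ.filter fun i => y i = a).card : ℝ) / n

open Finset Nat


lemma factPow_le (m l : ℕ) : m ! * m ^ l ≤ l ! * m ^ m := by
  rcases le_total l m with h | h
  · have h1 : l ! * m.descFactorial (m - l) = m ! := by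
      have := Nat.factorial_mul_descFactorial (n := m) (k := m - l) (Nat.sub_le _ _)
      rwa [Nat.sub_sub_self h] at this
    calc m ! * m ^ l = l ! * m.descFactorial (m - l) * m ^ l := by rw [h1]
      _ ≤ l ! * m ^ (m - l) * m ^ l :=
          Nat.mul_le_mul_right _ (Nat.mul_le_mul_left _ (Nat.descFactorial_le_pow _ _))
      _ = l ! * m ^ m := by rw [mul_assoc, ← pow_add, Nat.sub_add_cancel h]
  · have h1 : m ! * l.descFactorial (l - m) = l ! := by
      have := Nat.factorial_mul_descFactorial (n := l) (k := l - m) (Nat.sub_le _ _)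
      rwa [Nat.sub_sub_self h] at this
    have h2 : m ^ (l - m) ≤ l.descFactorial (l - m) := by
      calc m ^ (l - m) ≤ (m + 1) ^ (l - m) := Nat.pow_le_pow_left (Nat.le_succ m) _
        _ = (l + 1 - (l - m)) ^ (l - m) := by congr 1; omega
        _ ≤ l.descFactorial (l - m) := Nat.pow_sub_le_descFactorial _ _
    calc m ! * m ^ l = m ! * (m ^ (l - m) * m ^ m) := by rw [← pow_add]; congr 2; omega
      _ ≤ m ! * (l.descFactorial (l - m) * m ^ m) :=
          Nat.mul_le_mul_left _ (Nat.mul_le_mul_right _ h2)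
      _ = l ! * m ^ m := by rw [← mul_assoc, h1]

lemma comp_nat {𝒴 : Type*} [Fintype 𝒴] [DecidableEq 𝒴] {n : ℕ} (k k' : 𝒴 → ℕ)
    (hk : ∑ a, k a = n) (hk' : ∑ a, k' a = n) :
    Nat.multinomial univ k' * ∏ a, k a ^ k' a ≤ Nat.multinomial univ k * ∏ a, k a ^ k a := by
  have spec : (∏ a, (k a)!) * Nat.multinomial univ k = n ! := by
    rw [Nat.multinomial_spec, hk]
  have spec' : (∏ a, (k' a)!) * Nat.multinomial univ k' = n ! := by
    rw [Nat.multinomial_spec, hk']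
  have hpos : 0 < (∏ a, (k a)!) * (∏ a, (k' a)!) :=
    Nat.mul_pos (Finset.prod_pos fun a _ => Nat.factorial_pos _)
      (Finset.prod_pos fun a _ => Nat.factorial_pos _)
  refine Nat.le_of_mul_le_mul_left ?_ hpos
  have key : (∏ a, (k a)! * k a ^ k' a) ≤ ∏ a, (k' a)! * k a ^ k a :=
    Finset.prod_le_prod' fun a _ => factPow_le _ _
  calc (∏ a, (k a)!) * (∏ a, (k' a)!) * (Nat.multinomial univ k' * ∏ a, k a ^ k' a)
      = (∏ a, (k a)! * k a ^ k' a) * ((∏ a, (k' a)!) * Nat.multinomial univ k') := by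
        rw [Finset.prod_mul_distrib]; ring
    _ = (∏ a, (k a)! * k a ^ k' a) * n ! := by rw [spec']
    _ ≤ (∏ a, (k' a)! * k a ^ k a) * n ! := Nat.mul_le_mul_right _ key
    _ = (∏ a, (k a)!) * (∏ a, (k' a)!) * (Nat.multinomial univ k * ∏ a, k a ^ k a) := by
        rw [Finset.prod_mul_distrib, ← spec]; ring

lemma prod_comp_cnt {𝒴 : Type*} [Fintype 𝒴] [DecidableEq 𝒴] {n : ℕ} (y : Fin n → 𝒴)
    {M : Type*} [CommMonoid M] (f : 𝒴 → M) :
    ∏ i, f (y i) = ∏ a, f a ^ (univ.filter fun i => y i = a).card := by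
  rw [← Finset.prod_fiberwise univ y (fun i => f (y i))]
  refine Finset.prod_congr rfl fun a _ => ?_
  calc ∏ i ∈ univ.filter fun i => y i = a, f (y i)
      = ∏ _i ∈ univ.filter fun i => y i = a, f a :=
        Finset.prod_congr rfl fun i hi => by rw [(Finset.mem_filter.mp hi).2]
    _ = f a ^ (univ.filter fun i => y i = a).card := Finset.prod_const _

lemma prod_X_pow_univ {𝒴 : Type*} [Fintype 𝒴] [DecidableEq 𝒴] (k : 𝒴 → ℕ) :
    (∏ a, (MvPolynomial.X a : MvPolynomial 𝒴 ℕ) ^ k a)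
      = MvPolynomial.monomial (Finsupp.equivFunOnFinite.symm k) 1 := by
  set d : 𝒴 →₀ ℕ := Finsupp.equivFunOnFinite.symm k with hd
  have hda : ∀ a, d a = k a := fun a => rfl
  calc (∏ a, (MvPolynomial.X a : MvPolynomial 𝒴 ℕ) ^ k a)
      = ∏ a ∈ d.support, (MvPolynomial.X a : MvPolynomial 𝒴 ℕ) ^ k a :=
        (Finset.prod_subset (Finset.subset_univ _) (fun a _ ha => by
          rw [← hda a, Finsupp.notMem_support_iff.mp ha, pow_zero])).symm
    _ = ∏ a ∈ d.support, (MvPolynomial.X a : MvPolynomial 𝒴 ℕ) ^ d a :=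
        Finset.prod_congr rfl fun a _ => by rw [hda]
    _ = MvPolynomial.monomial d 1 := MvPolynomial.prod_X_pow_eq_monomial

lemma card_typeClass {𝒴 : Type*} [Fintype 𝒴] [DecidableEq 𝒴] {n : ℕ} (k : 𝒴 → ℕ)
    (hk : ∑ a, k a = n) :
    (univ.filter fun y : Fin n → 𝒴 =>
        (fun a => (univ.filter fun i => y i = a).card) = k).card
      = Nat.multinomial univ k := by
  classical
  set toF : (𝒴 → ℕ) → (𝒴 →₀ ℕ) := fun k' => Finsupp.equivFunOnFinite.symm k' with htoF
  have htoFinj : Function.Injective toF := Finsupp.equivFunOnFinite.symm.injective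
  have h1 : ((∑ a, MvPolynomial.X a : MvPolynomial 𝒴 ℕ)) ^ n
      = ∑ k' ∈ Finset.piAntidiag univ n,
          MvPolynomial.C (Nat.multinomial univ k') * MvPolynomial.monomial (toF k') 1 := by
    rw [Finset.sum_pow_eq_sum_piAntidiag]
    refine Finset.sum_congr rfl fun k' _ => ?_
    rw [prod_X_pow_univ, ← MvPolynomial.C_eq_coe_nat, Nat.cast_id]
  have h2 : ((∑ a, MvPolynomial.X a : MvPolynomial 𝒴 ℕ)) ^ n
      = ∑ y : Fin n → 𝒴,
          MvPolynomial.monomial (toF fun a => (univ.filter fun i => y i = a).card) 1 := by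
    calc ((∑ a, MvPolynomial.X a : MvPolynomial 𝒴 ℕ)) ^ n
        = ∏ _i : Fin n, (∑ a, MvPolynomial.X a : MvPolynomial 𝒴 ℕ) := by
          rw [Finset.prod_const, Finset.card_univ, Fintype.card_fin]
      _ = ∑ y ∈ Fintype.piFinset (fun _ : Fin n => (univ : Finset 𝒴)),
            ∏ i, MvPolynomial.X (y i) := Finset.prod_univ_sum _ _
      _ = ∑ y : Fin n → 𝒴,
            MvPolynomial.monomial (toF fun a => (univ.filter fun i => y i = a).card) 1 := by
          rw [Fintype.piFinset_univ]
          exact Finset.sum_congr rfl fun y _ => by rw [prod_comp_cnt y, prod_X_pow_univ]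
  have key := congrArg (MvPolynomial.coeff (toF k)) (h1.symm.trans h2)
  rw [MvPolynomial.coeff_sum, MvPolynomial.coeff_sum] at key
  have lhs_eq : ∑ k' ∈ Finset.piAntidiag univ n,
      MvPolynomial.coeff (toF k) (MvPolynomial.C (Nat.multinomial univ k')
        * MvPolynomial.monomial (toF k') 1) = Nat.multinomial univ k := by
    rw [Finset.sum_eq_single k]
    · rw [MvPolynomial.coeff_C_mul, MvPolynomial.coeff_monomial, if_pos rfl, mul_one]
    · intro k' _ hne
      rw [MvPolynomial.coeff_C_mul, MvPolynomial.coeff_monomial,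
        if_neg (fun h => hne (htoFinj h)), mul_zero]
    · intro h
      exact absurd (Finset.mem_piAntidiag.mpr ⟨hk, fun a _ => Finset.mem_univ a⟩) h
  have rhs_eq : ∑ y : Fin n → 𝒴,
      MvPolynomial.coeff (toF k)
        (MvPolynomial.monomial (toF fun a => (univ.filter fun i => y i = a).card) 1)
      = (univ.filter fun y : Fin n → 𝒴 =>
          (fun a => (univ.filter fun i => y i = a).card) = k).card := by
    rw [Finset.card_filter]
    refine Finset.sum_congr rfl fun y _ => ?_
    rw [MvPolynomial.coeff_monomial]
    by_cases h : (fun a => (univ.filter fun i => y i = a).card) = k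
    · rw [if_pos (by rw [h]), if_pos h]
    · rw [if_neg (fun hh => h (htoFinj hh)), if_neg h]
  rw [lhs_eq, rhs_eq] at key
  exact key.symm

/-- method-of-types lower bound (Csiszár–Körner Lemma 2.6):
for an `n`-type `V` absolutely continuous w.r.t. `P`, the `Pⁿ`-probability that
the type of `Yⁿ` equals `V` is at least `(n+1)^{-|𝒴|} e^{-n D(V‖P)}`. -/
theorem stmt4 {𝒴 : Type*} [Fintype 𝒴] [DecidableEq 𝒴] (n : ℕ) (hn : 0 < n)
    (V P : 𝒴 → ℝ) (hV : IsPMF V) (hP : IsPMF P)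
    (habs : ∀ y, P y = 0 → V y = 0)
    (htype : ∀ y, ∃ k : ℕ, V y = (k : ℝ) / n) :
    (((n : ℝ) + 1) ^ (Fintype.card 𝒴))⁻¹ * Real.exp (-(n : ℝ) * klReal V P)
      ≤ ∑ y : Fin n → 𝒴,
          Set.indicator {y : Fin n → 𝒴 | empDist y = V} (fun y => ∏ i, P (y i)) y := by
  classical
  obtain ⟨hV0, hV1⟩ := hV
  obtain ⟨hP0, hP1⟩ := hP
  have hn' : (0 : ℝ) < n := by exact_mod_cast hn
  have hne : (n : ℝ) ≠ 0 := ne_of_gt hn'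
  choose k hkV using htype
  have hsum : ∑ a, k a = n := by
    have h : ((∑ a, k a : ℕ) : ℝ) = n := by
      push_cast
      calc (∑ a, (k a : ℝ)) = ∑ a, V a * n := by
            refine Finset.sum_congr rfl fun a _ => ?_
            rw [hkV a]; field_simp
        _ = n := by rw [← Finset.sum_mul, hV1, one_mul]
    exact_mod_cast h
  set cnt : (Fin n → 𝒴) → 𝒴 → ℕ := fun y a => (univ.filter fun i => y i = a).card with hcnt
  have hkey : ∀ c d : ℕ, ((c : ℝ) / n = (d : ℝ) / n) ↔ c = d := by
    intro c d
    constructor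
    · intro h; field_simp at h; exact_mod_cast h
    · intro h; rw [h]
  have hemp : ∀ y : Fin n → 𝒴, (empDist y = V) ↔ cnt y = k := by
    intro y
    constructor
    · intro h; funext a
      have h2 := congrFun h a
      rw [hkV a] at h2
      exact (hkey _ _).mp h2
    · intro h; funext a
      have h2 := congrFun h a
      show ((cnt y a : ℝ)) / n = V a
      rw [hkV a, h2]
  -- total N on the class
  set N : (𝒴 → ℕ) → ℕ := fun k' => (univ.filter fun y : Fin n → 𝒴 => cnt y = k').card with hN
  have hind : (∑ y : Fin n → 𝒴,
        Set.indicator {y : Fin n → 𝒴 | empDist y = V} (fun y => ∏ i, P (y i)) y)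
      = ∑ y ∈ univ.filter fun y : Fin n → 𝒴 => cnt y = k, ∏ i, P (y i) := by
    rw [Finset.sum_filter]
    refine Finset.sum_congr rfl fun y _ => ?_
    rw [Set.indicator_apply]
    simp only [Set.mem_setOf_eq]
    by_cases h : cnt y = k
    · rw [if_pos ((hemp y).mpr h), if_pos h]
    · rw [if_neg (fun hh => h ((hemp y).mp hh)), if_neg h]
  have hRHS : (∑ y : Fin n → 𝒴,
        Set.indicator {y : Fin n → 𝒴 | empDist y = V} (fun y => ∏ i, P (y i)) y)
      = (N k : ℝ) * ∏ a, P a ^ k a := by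
    rw [hind]
    have hv : ∀ y ∈ univ.filter fun y : Fin n → 𝒴 => cnt y = k,
        (∏ i, P (y i)) = ∏ a, P a ^ k a := by
      intro y hy
      rw [prod_comp_cnt y P]
      refine Finset.prod_congr rfl fun a _ => ?_
      show P a ^ cnt y a = P a ^ k a
      rw [congrFun (Finset.mem_filter.mp hy).2 a]
    rw [Finset.sum_congr rfl hv, Finset.sum_const, nsmul_eq_mul]
  -- relating exp and products
  have hVk0 : ∀ a, V a = 0 ↔ k a = 0 := by
    intro a
    rw [hkV a, div_eq_zero_iff]
    simp [hne]
  have hPpos : ∀ a, k a ≠ 0 → 0 < P a := by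
    intro a hka
    rcases lt_or_eq_of_le (hP0 a) with h | h
    · exact h
    · exact absurd ((hVk0 a).mp (habs a h.symm)) hka
  have hVpos : ∀ a, k a ≠ 0 → 0 < V a := by
    intro a hka
    rcases lt_or_eq_of_le (hV0 a) with h | h
    · exact h
    · exact absurd ((hVk0 a).mp h.symm) hka
  have hexp : Real.exp (-(n : ℝ) * klReal V P) * ∏ a, V a ^ k a = ∏ a, P a ^ k a := by
    have h1 : -(n : ℝ) * klReal V P
        = ∑ a, (if V a = 0 then (0:ℝ) else (k a : ℝ) * Real.log (P a / V a)) := by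
      rw [klReal, Finset.mul_sum]
      refine Finset.sum_congr rfl fun a _ => ?_
      by_cases h : V a = 0
      · rw [if_pos h, if_pos h, mul_zero]
      · rw [if_neg h, if_neg h]
        have hnV : (n : ℝ) * V a = k a := by rw [hkV a]; field_simp
        calc -(n : ℝ) * (V a * Real.log (V a / P a))
            = (n : ℝ) * V a * (-Real.log (V a / P a)) := by ring
          _ = (k a : ℝ) * Real.log (P a / V a) := by
              rw [hnV, ← Real.log_inv, inv_div]
    rw [h1, Real.exp_sum, ← Finset.prod_mul_distrib]
    refine Finset.prod_congr rfl fun a _ => ?_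
    by_cases h : V a = 0
    · have hk0 : k a = 0 := (hVk0 a).mp h
      rw [if_pos h, hk0, Real.exp_zero, pow_zero, pow_zero, mul_one]
    · have hka : k a ≠ 0 := fun hh => h ((hVk0 a).mpr hh)
      rw [if_neg h, Real.exp_nat_mul,
        Real.exp_log (div_pos (hPpos a hka) (hVpos a hka)),
        ← mul_pow, div_mul_cancel₀ _ (ne_of_gt (hVpos a hka))]
  -- the key counting inequality
  set T : ℝ := (N k : ℝ) * ∏ a, V a ^ k a with hT
  have hTnonneg : 0 ≤ T :=
    mul_nonneg (Nat.cast_nonneg _) (Finset.prod_nonneg fun a _ => pow_nonneg (hV0 a) _)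
  have hterm : ∀ k' : 𝒴 → ℕ, (∑ a, k' a = n) → (N k' : ℝ) * ∏ a, V a ^ k' a ≤ T := by
    intro k' hk'
    have e1 : ∀ m : 𝒴 → ℕ, (∑ a, m a = n) →
        (∏ a, V a ^ m a) = (∏ a, (k a : ℝ) ^ m a) / (n : ℝ) ^ n := by
      intro m hm
      calc (∏ a, V a ^ m a) = ∏ a, ((k a : ℝ) ^ m a / (n : ℝ) ^ m a) := by
            refine Finset.prod_congr rfl fun a _ => ?_
            rw [hkV a, div_pow]
        _ = (∏ a, (k a : ℝ) ^ m a) / ∏ a, (n : ℝ) ^ m a := Finset.prod_div_distrib _ _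
        _ = (∏ a, (k a : ℝ) ^ m a) / (n : ℝ) ^ n := by
            rw [Finset.prod_pow_eq_pow_sum, hm]
    have hNmult : ∀ m : 𝒴 → ℕ, (∑ a, m a = n) → N m = Nat.multinomial univ m := by
      intro m hm
      exact card_typeClass m hm
    have hnat := comp_nat k k' hsum hk'
    have hcast : (N k' : ℝ) * (∏ a, (k a : ℝ) ^ k' a)
        ≤ (N k : ℝ) * (∏ a, (k a : ℝ) ^ k a) := by
      rw [hNmult k' hk', hNmult k hsum]
      exact_mod_cast hnat
    rw [e1 k' hk', hT, e1 k hsum]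
    have hp : (0 : ℝ) < (n : ℝ) ^ n := by positivity
    calc (N k' : ℝ) * ((∏ a, (k a : ℝ) ^ k' a) / (n : ℝ) ^ n)
        = ((N k' : ℝ) * ∏ a, (k a : ℝ) ^ k' a) / (n : ℝ) ^ n := by ring
      _ ≤ ((N k : ℝ) * ∏ a, (k a : ℝ) ^ k a) / (n : ℝ) ^ n := by
          gcongr ?_ / _
      _ = (N k : ℝ) * ((∏ a, (k a : ℝ) ^ k a) / (n : ℝ) ^ n) := by ring
  -- sum over the image of cnt
  have hone : (1 : ℝ) = ∑ b ∈ univ.image cnt,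
      ((univ.filter fun y : Fin n → 𝒴 => cnt y = b).card : ℝ) * ∏ a, V a ^ b a := by
    have c1 : (1 : ℝ) = ∑ y : Fin n → 𝒴, ∏ i, V (y i) := by
      calc (1 : ℝ) = (∑ a, V a) ^ n := by rw [hV1, one_pow]
        _ = ∏ _i : Fin n, (∑ a, V a) := by
            rw [Finset.prod_const, Finset.card_univ, Fintype.card_fin]
        _ = ∑ y ∈ Fintype.piFinset (fun _ : Fin n => (univ : Finset 𝒴)),
              ∏ i, V (y i) := Finset.prod_univ_sum _ _
        _ = ∑ y : Fin n → 𝒴, ∏ i, V (y i) := by rw [Fintype.piFinset_univ]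
    have c2 : ∀ y : Fin n → 𝒴, (∏ i, V (y i)) = (fun b => ∏ a, V a ^ b a) (cnt y) :=
      fun y => prod_comp_cnt y V
    rw [c1, Finset.sum_congr rfl fun y _ => c2 y,
      Finset.sum_comp (fun b => ∏ a, V a ^ b a) cnt]
    exact Finset.sum_congr rfl fun b _ => by rw [nsmul_eq_mul]
  have himg_sum : ∀ b ∈ univ.image cnt, ∑ a, b a = n := by
    intro b hb
    obtain ⟨y, _, rfl⟩ := Finset.mem_image.mp hb
    have := Finset.card_eq_sum_card_fiberwise
      (f := y) (s := univ) (t := univ) (fun i _ => Finset.mem_univ _)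
    rw [Finset.card_univ, Fintype.card_fin] at this
    exact this.symm
  have hcard_img : ((univ.image cnt).card : ℝ) ≤ ((n : ℝ) + 1) ^ (Fintype.card 𝒴) := by
    have hle : (univ.image cnt).card ≤ (n + 1) ^ (Fintype.card 𝒴) := by
      have : (univ.image cnt).card ≤ (univ : Finset (𝒴 → Fin (n + 1))).card := by
        apply Finset.card_le_card_of_injOn (fun b a => ⟨min (b a) n, by omega⟩)
          (fun _ _ => Finset.mem_univ _)
        intro b1 h1 b2 h2 heq
        have hbnd : ∀ b ∈ univ.image cnt, ∀ a, b a ≤ n := by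
          intro b hb a
          obtain ⟨y, _, rfl⟩ := Finset.mem_image.mp hb
          calc cnt y a ≤ (univ : Finset (Fin n)).card := Finset.card_filter_le _ _
            _ = n := by rw [Finset.card_univ, Fintype.card_fin]
        funext a
        have e := congrArg Fin.val (congrFun heq a)
        simp only at e
        have b1le := hbnd b1 (Finset.mem_coe.mp h1) a
        have b2le := hbnd b2 (Finset.mem_coe.mp h2) a
        omega
      rw [Finset.card_univ, Fintype.card_fun, Fintype.card_fin] at this
      exact this
    calc ((univ.image cnt).card : ℝ) ≤ (((n + 1) ^ (Fintype.card 𝒴) : ℕ) : ℝ) := by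
          exact_mod_cast hle
      _ = ((n : ℝ) + 1) ^ (Fintype.card 𝒴) := by push_cast; ring
  have hMpos : (0 : ℝ) < ((n : ℝ) + 1) ^ (Fintype.card 𝒴) := by positivity
  have hbound : (1 : ℝ) ≤ ((n : ℝ) + 1) ^ (Fintype.card 𝒴) * T := by
    calc (1 : ℝ) = ∑ b ∈ univ.image cnt,
          ((univ.filter fun y : Fin n → 𝒴 => cnt y = b).card : ℝ) * ∏ a, V a ^ b a := hone
      _ ≤ ∑ _b ∈ univ.image cnt, T :=
          Finset.sum_le_sum fun b hb => hterm b (himg_sum b hb)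
      _ = ((univ.image cnt).card : ℝ) * T := by rw [Finset.sum_const, nsmul_eq_mul]
      _ ≤ ((n : ℝ) + 1) ^ (Fintype.card 𝒴) * T :=
          mul_le_mul_of_nonneg_right hcard_img hTnonneg
  have hinv : (((n : ℝ) + 1) ^ (Fintype.card 𝒴))⁻¹ ≤ T := by
    rw [inv_eq_one_div, div_le_iff₀ hMpos]
    linarith [hbound]
  -- conclude
  rw [hRHS, ← hexp, ← mul_assoc]
  calc (((n : ℝ) + 1) ^ (Fintype.card 𝒴))⁻¹ * Real.exp (-(n : ℝ) * klReal V P)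
      ≤ T * Real.exp (-(n : ℝ) * klReal V P) :=
        mul_le_mul_of_nonneg_right hinv (Real.exp_nonneg _)
    _ = (N k : ℝ) * Real.exp (-(n : ℝ) * klReal V P) * ∏ a, V a ^ k a := by
        rw [hT]; ring
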